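/- Let A ∈ ℝ^{N×N} be stable and C ∈ ℝ^{q×N}. Then the integral X = ∫₀^∞ exp(Aᵀt)·CᵀC·exp(At) dt converges, X is symmetric positive semidefinite, and X satisfies the Lyapunov equation AᵀX + XA = −CᵀC. -/

import Mathlib

open Matrix MeasureTheory

section Auxiliary
open Polynomial NNReal Filter

/-! ### Instance-free entrywise matrix exponential -/

noncomputable def expE {n : Type*} [Fintype n] [DecidableEq n] {𝔸 : Type*} [NormedRing 𝔸]
    [NormedAlgebra ℝ 𝔸] (x : Matrix n n 𝔸) : Matrix n n 𝔸 :=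
  Matrix.of fun i j => ∑' k : ℕ, (k.factorial : ℝ)⁻¹ • ((x ^ k) i j)

lemma expE_transpose {n : Type*} [Fintype n] [DecidableEq n] {𝔸 : Type*} [NormedCommRing 𝔸]
    [NormedAlgebra ℝ 𝔸] (x : Matrix n n 𝔸) : expE xᵀ = (expE x)ᵀ := by
  ext i j
  simp [expE, Matrix.transpose_apply, ← Matrix.transpose_pow]

lemma exists_unif_eps (l : List ℂ) (h : ∀ z ∈ l, z.re < 0) :
    ∃ eps : ℝ, 0 < eps ∧ ∀ z ∈ l, z.re ≤ -eps := by
  induction l with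
  | nil => exact ⟨1, one_pos, by simp⟩
  | cons z l ih =>
    obtain ⟨e, he, hle⟩ := ih (fun w hw => h w (List.mem_cons_of_mem _ hw))
    have hz : z.re < 0 := h z (List.mem_cons_self)
    refine ⟨min e (-z.re), lt_min he (by linarith), ?_⟩
    intro w hw
    rcases List.mem_cons.1 hw with rfl | hw
    · have := min_le_right e (-w.re); linarith
    · have := min_le_left e (-z.re); have := hle w hw; linarith

lemma eval_charpoly_eq_det {n : Type*} [Fintype n] [DecidableEq n]
    (B : Matrix n n ℂ) (z : ℂ) :
    B.charpoly.eval z = Matrix.det (z • (1 : Matrix n n ℂ) - B) := by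
  rw [Matrix.charpoly, show (Polynomial.eval z : ℂ[X] → ℂ) = ⇑(evalRingHom z) from rfl,
    RingHom.map_det]
  congr 1
  ext i j
  by_cases h : i = j <;>
    simp [h, charmatrix_apply, Matrix.one_apply, Matrix.diagonal_apply, RingHom.mapMatrix_apply,
      Matrix.smul_apply, Matrix.sub_apply]

lemma root_mem_spectrum {n : Type*} [Fintype n] [DecidableEq n] (B : Matrix n n ℂ) (z : ℂ)
    (hz : z ∈ B.charpoly.roots) : z ∈ spectrum ℂ B := by
  have hroot : B.charpoly.eval z = 0 := (Polynomial.mem_roots'.1 hz).2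
  rw [spectrum.mem_iff]
  intro hunit
  rw [Matrix.isUnit_iff_isUnit_det] at hunit
  have heq : (algebraMap ℂ (Matrix n n ℂ)) z - B
      = z • (1 : Matrix n n ℂ) - B := by
    rw [Algebra.algebraMap_eq_smul_one]
  rw [heq] at hunit
  rw [eval_charpoly_eq_det] at hroot
  rw [hroot] at hunit
  simp at hunit

lemma charpoly_list_prod {n : Type*} [Fintype n] [DecidableEq n] (B : Matrix n n ℂ) :
    (B.charpoly.roots.toList.map (fun z => B - z • 1)).prod = 0 := by
  have hm := B.charpoly_monic
  have hs : Splits B.charpoly := IsAlgClosed.splits _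
  have h0 := B.aeval_self_charpoly
  rw [hs.eq_prod_roots_of_monic hm] at h0
  rw [← Multiset.coe_toList B.charpoly.roots, Multiset.map_coe, Multiset.prod_coe] at h0
  rw [map_list_prod (aeval B)] at h0
  rw [List.map_map] at h0
  have hfun : (fun z : ℂ => B - z • (1 : Matrix n n ℂ)) = (⇑(aeval B) ∘ fun x => X - C x) := by
    funext z
    simp [Algebra.algebraMap_eq_smul_one]
  rw [hfun]
  exact h0

lemma stable_transpose {n : Type*} [Fintype n] [DecidableEq n] (A : Matrix n n ℝ)
    (hA : ∀ z ∈ spectrum ℂ (A.map (Complex.ofReal ·)), z.re < 0) :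
    ∀ z ∈ spectrum ℂ (Aᵀ.map (Complex.ofReal ·)), z.re < 0 := by
  intro z hz
  apply hA z
  have htr : Aᵀ.map (Complex.ofReal ·) = (A.map (Complex.ofReal ·))ᵀ := by
    ext i j; simp [Matrix.map_apply]
  rw [htr] at hz
  rw [spectrum.mem_iff] at hz ⊢
  intro hu
  apply hz
  have heq : algebraMap ℂ (Matrix n n ℂ) z - (A.map (Complex.ofReal ·))ᵀ
      = (algebraMap ℂ (Matrix n n ℂ) z - A.map (Complex.ofReal ·))ᵀ := by
    rw [Matrix.transpose_sub]
    congr 1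
    simp [Algebra.algebraMap_eq_smul_one, Matrix.transpose_smul]
  rw [heq, Matrix.isUnit_iff_isUnit_det, Matrix.det_transpose,
    ← Matrix.isUnit_iff_isUnit_det]
  exact hu

lemma integral_exp_mul_real (b t : ℝ) (hb : b ≠ 0) :
    ∫ s in (0:ℝ)..t, Real.exp (b * s) = (Real.exp (b * t) - 1) / b := by
  have h : ∀ s ∈ Set.uIcc (0:ℝ) t, HasDerivAt (fun u => Real.exp (b * u) / b)
      (Real.exp (b * s)) s := by
    intro s _
    have h1 : HasDerivAt (fun u : ℝ => b * u) b s := by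
      simpa using (hasDerivAt_id s).const_mul b
    have := (h1.exp).div_const b
    simpa [mul_comm, mul_div_assoc, mul_div_cancel_left₀ _ hb] using this
  have := intervalIntegral.integral_eq_sub_of_hasDerivAt h
    (Continuous.intervalIntegrable (by continuity) _ _)
  simp only [mul_zero, Real.exp_zero] at this
  rw [this]; ring

/-- Solutions of `g' = λ g + h` with `Re λ ≤ -ε` and exponentially decaying `h`
decay exponentially. -/
lemma decay_first_order {E : Type*} [NormedAddCommGroup E] [NormedSpace ℂ E] [CompleteSpace E]
    (lam : ℂ) (eps del : ℝ) (hlam : lam.re ≤ -eps) (hde : del < eps)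
    (g h : ℝ → E) (hg : ∀ t, HasDerivAt g (lam • g t + h t) t)
    (hh : Continuous h) (c : ℝ) (hc : 0 ≤ c)
    (hb : ∀ t ≥ 0, ‖h t‖ ≤ c * Real.exp (-del * t)) :
    ∀ t ≥ 0, ‖g t‖ ≤ (‖g 0‖ + c / (eps - del)) * Real.exp (-del * t) := by
  set a : ℝ := -lam.re with ha
  have had : del < a := lt_of_lt_of_le hde (by linarith)
  have had0 : 0 < a - del := by linarith
  have hed0 : 0 < eps - del := by linarith
  set w : ℝ → E := fun t => Complex.exp (-lam * t) • g t with hw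
  have hw' : ∀ t : ℝ, HasDerivAt w (Complex.exp (-lam * (t:ℂ)) • h t) t := by
    intro t
    have h1 : HasDerivAt (fun u : ℝ => -lam * (u : ℂ)) (-lam) t := by
      simpa using (Complex.ofRealCLM.hasDerivAt (x := t)).const_mul (-lam)
    have h2 : HasDerivAt (fun u : ℝ => Complex.exp (-lam * u))
        (Complex.exp (-lam * t) * -lam) t := by
      simpa [mul_comm] using h1.cexp
    have h3 := h2.smul (hg t)
    have heq : Complex.exp (-lam * t) • (lam • g t + h t)
        + (Complex.exp (-lam * t) * -lam) • g t = Complex.exp (-lam * (t:ℂ)) • h t := by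
      rw [smul_add, smul_smul, add_comm, ← add_assoc, ← add_smul]
      ring_nf
      simp
    rwa [heq] at h3
  have hwc : Continuous fun s : ℝ => Complex.exp (-lam * (s:ℂ)) • h s := by
    apply Continuous.smul _ hh
    exact Complex.continuous_exp.comp (by continuity)
  intro t ht
  have hftc : ∫ s in (0:ℝ)..t, Complex.exp (-lam * (s:ℂ)) • h s = w t - w 0 :=
    intervalIntegral.integral_eq_sub_of_hasDerivAt (fun s _ => hw' s)
      (hwc.intervalIntegrable _ _)
  have hw0 : w 0 = g 0 := by simp [hw]
  have hnormint : ‖∫ s in (0:ℝ)..t, Complex.exp (-lam * (s:ℂ)) • h s‖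
      ≤ ∫ s in (0:ℝ)..t, c * Real.exp ((a - del) * s) := by
    refine (intervalIntegral.norm_integral_le_integral_norm ht).trans ?_
    refine intervalIntegral.integral_mono_on ht ((hwc.norm).intervalIntegrable _ _)
      (Continuous.intervalIntegrable (by continuity) _ _) ?_
    intro s hs
    rw [norm_smul, Complex.norm_exp]
    have : (-lam * (s:ℂ)).re = a * s := by simp [ha]; try ring
    rw [this]
    calc Real.exp (a * s) * ‖h s‖ ≤ Real.exp (a * s) * (c * Real.exp (-del * s)) := by
          exact mul_le_mul_of_nonneg_left (hb s hs.1) (Real.exp_pos _).le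
      _ = c * Real.exp ((a - del) * s) := by
          rw [mul_left_comm, ← Real.exp_add]; ring_nf
  have hint : ∫ s in (0:ℝ)..t, c * Real.exp ((a - del) * s)
      ≤ (c / (eps - del)) * Real.exp ((a - del) * t) := by
    rw [intervalIntegral.integral_const_mul, integral_exp_mul_real _ _ (ne_of_gt had0)]
    rw [div_eq_mul_inv, div_eq_mul_inv, mul_assoc]
    apply mul_le_mul_of_nonneg_left _ hc
    calc (Real.exp ((a - del) * t) - 1) * (a - del)⁻¹
        ≤ Real.exp ((a - del) * t) * (a - del)⁻¹ := by
          apply mul_le_mul_of_nonneg_right (by linarith) (by positivity)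
      _ ≤ (eps - del)⁻¹ * Real.exp ((a - del) * t) := by
          rw [mul_comm]
          exact mul_le_mul_of_nonneg_right
            (by apply inv_anti₀ hed0; linarith) (Real.exp_pos _).le
  have hwt : ‖w t‖ ≤ ‖g 0‖ + (c / (eps - del)) * Real.exp ((a - del) * t) := by
    have : w t = w 0 + ∫ s in (0:ℝ)..t, Complex.exp (-lam * (s:ℂ)) • h s := by
      rw [hftc]; abel
    rw [this, hw0]
    exact (norm_add_le _ _).trans (add_le_add le_rfl (hnormint.trans hint))
  have hgt : g t = Complex.exp (lam * t) • w t := by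
    rw [hw, smul_smul, ← Complex.exp_add]
    simp
  rw [hgt, norm_smul, Complex.norm_exp]
  have hre : (lam * t).re = -(a * t) := by simp [ha]; try ring
  rw [hre]
  calc Real.exp (-(a*t)) * ‖w t‖
      ≤ Real.exp (-(a*t)) * (‖g 0‖ + (c / (eps - del)) * Real.exp ((a - del) * t)) := by
        exact mul_le_mul_of_nonneg_left hwt (Real.exp_pos _).le
    _ = ‖g 0‖ * Real.exp (-(a*t)) + (c / (eps - del)) * Real.exp (-del * t) := by
        rw [mul_add, mul_comm (Real.exp (-(a*t))) ‖g 0‖, mul_left_comm, ← Real.exp_add]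
        ring_nf
    _ ≤ ‖g 0‖ * Real.exp (-del * t) + (c / (eps - del)) * Real.exp (-del * t) := by
        exact add_le_add (mul_le_mul_of_nonneg_left
          (Real.exp_le_exp.2 (by nlinarith)) (norm_nonneg _)) le_rfl
    _ = (‖g 0‖ + c / (eps - del)) * Real.exp (-del * t) := by ring

end Auxiliary

section Linfty
open Polynomial NNReal
/-! ### Work in the `L∞` operator norm, where matrices form a Banach algebra. -/
attribute [local instance] Matrix.linftyOpNormedAddCommGroup Matrix.linftyOpNormedRing
  Matrix.linftyOpNormedAlgebra

variable {n : Type*} [Fintype n] [DecidableEq n]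
variable {𝔸 : Type*} [NormedField 𝔸] [NormedAlgebra ℝ 𝔸] [CompleteSpace 𝔸]
  [FiniteDimensional ℝ 𝔸]

noncomputable def entryCLM (i j : n) : Matrix n n 𝔸 →L[ℝ] 𝔸 :=
  LinearMap.toContinuousLinearMap
    { toFun := fun M => M i j
      map_add' := fun _ _ => rfl
      map_smul' := fun _ _ => rfl }

theorem exp_eq_expE (x : Matrix n n 𝔸) : NormedSpace.exp x = expE x := by
  ext i j
  rw [NormedSpace.exp_eq_tsum ℝ]
  have hE : ∀ M : Matrix n n 𝔸, entryCLM (𝔸 := 𝔸) i j M = M i j := fun _ => rfl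
  simpa [expE, hE] using ((entryCLM (𝔸 := 𝔸) i j).map_tsum
    (NormedSpace.expSeries_summable' (𝕂 := ℝ) x))

lemma expE_zero : expE (0 : Matrix n n 𝔸) = 1 := by
  rw [← exp_eq_expE, NormedSpace.exp_zero]

theorem entry_le_linfty_norm (M : Matrix n n 𝔸) (i j : n) : ‖M i j‖ ≤ ‖M‖ := by
  rw [← coe_nnnorm, ← coe_nnnorm, NNReal.coe_le_coe, Matrix.linfty_opNNNorm_def]
  calc ‖M i j‖₊ ≤ ∑ j', ‖M i j'‖₊ :=
        Finset.single_le_sum (f := fun j' => ‖M i j'‖₊) (fun _ _ => zero_le) (Finset.mem_univ j)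
    _ ≤ _ := Finset.le_sup (f := fun i => ∑ j', ‖M i j'‖₊) (Finset.mem_univ i)

theorem matDeriv (M B : Matrix n n 𝔸) (t : ℝ) :
    HasDerivAt (fun s : ℝ => M * NormedSpace.exp (s • B))
      (M * B * NormedSpace.exp (t • B)) t := by
  have h := hasDerivAt_exp_smul_const' (𝕂 := ℝ) B t
  have := ((ContinuousLinearMap.mul ℝ (Matrix n n 𝔸) M).hasFDerivAt).comp_hasDerivAt t h
  rw [mul_assoc]
  exact this

theorem chain_decay (B : Matrix n n ℂ) (eps : ℝ) (he : 0 < eps)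
    (l : List ℂ) (hl : ∀ z ∈ l, z.re ≤ -eps) :
    ∀ M : Matrix n n ℂ, M * (l.map (fun z => B - z • 1)).prod = 0 →
    ∃ c, 0 ≤ c ∧ ∀ t ≥ 0, ‖M * NormedSpace.exp (t • B)‖ ≤ c * Real.exp (-(eps/2) * t) := by
  have hde : eps/2 < eps := half_lt_self he
  induction l with
  | nil =>
    intro M hM
    simp only [List.map_nil, List.prod_nil, mul_one] at hM
    exact ⟨0, le_rfl, fun t ht => by simp [hM]⟩
  | cons z l ih =>
    intro M hM
    have hM' : (M * (B - z • 1)) * (l.map (fun z => B - z • 1)).prod = 0 := by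
      simpa [List.prod_cons, mul_assoc] using hM
    obtain ⟨c, hc, hbd⟩ := ih (fun w hw => hl w (List.mem_cons_of_mem _ hw)) (M * (B - z • 1)) hM'
    set g : ℝ → Matrix n n ℂ := fun t => M * NormedSpace.exp (t • B) with hgdef
    set h : ℝ → Matrix n n ℂ := fun t => (M * (B - z • 1)) * NormedSpace.exp (t • B) with hhdef
    have hg : ∀ t, HasDerivAt g (z • g t + h t) t := by
      intro t
      have hd1 := matDeriv M B t
      have heq : M * B * NormedSpace.exp (t • B) = z • g t + h t := by
        simp only [hgdef, hhdef, mul_sub, sub_mul, smul_mul_assoc, mul_smul_comm, mul_one]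
        abel
      rwa [heq] at hd1
    have hh : Continuous h := by
      have : Differentiable ℝ h := fun t => (matDeriv (M * (B - z • 1)) B t).differentiableAt
      exact this.continuous
    have hfin := decay_first_order z eps (eps/2) (hl z (List.mem_cons_self)) hde
      g h hg hh c hc hbd
    have hnn : (0:ℝ) ≤ ‖g 0‖ + c / (eps - eps/2) :=
      add_nonneg (norm_nonneg _) (div_nonneg hc (by linarith))
    exact ⟨‖g 0‖ + c / (eps - eps/2), hnn, hfin⟩

theorem exp_decay_linfty (B : Matrix n n ℂ) (hB : ∀ z ∈ spectrum ℂ B, z.re < 0) :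
    ∃ c del : ℝ, 0 < del ∧ ∀ t ≥ 0, ‖NormedSpace.exp (t • B)‖ ≤ c * Real.exp (-del * t) := by
  set l := B.charpoly.roots.toList with hl
  have hneg : ∀ z ∈ l, z.re < 0 := fun z hz =>
    hB z (root_mem_spectrum B z (Multiset.mem_toList.1 hz))
  obtain ⟨eps, he, hle⟩ := exists_unif_eps l hneg
  obtain ⟨c, hc, hb⟩ := chain_decay B eps he l hle 1 (by simpa using charpoly_list_prod B)
  exact ⟨c, eps/2, half_pos he, fun t ht => by simpa using hb t ht⟩

noncomputable def mapRC : Matrix n n ℝ →ₗ[ℝ] Matrix n n ℂ where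
  toFun M := M.map (Complex.ofReal ·)
  map_add' a b := by ext i j; simp
  map_smul' r a := by ext i j; simp [Matrix.smul_apply, Complex.real_smul]

lemma map_exp_ofReal (x : Matrix n n ℝ) :
    (NormedSpace.exp x).map (Complex.ofReal ·)
      = NormedSpace.exp (x.map (Complex.ofReal ·)) := by
  have hlin : Continuous fun M : Matrix n n ℝ => M.map (Complex.ofReal ·) := by
    have := LinearMap.continuous_of_finiteDimensional (mapRC (n := n))
    simpa [mapRC] using this
  have := NormedSpace.map_exp ((Complex.ofRealHom.mapMatrix : Matrix n n ℝ →+* Matrix n n ℂ))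
    (by exact hlin) x
  exact this

/-- Entrywise exponential decay of `expE (t • A)` for a stable real matrix. -/
theorem expE_entry_decay (A : Matrix n n ℝ)
    (hA : ∀ z ∈ spectrum ℂ (A.map (Complex.ofReal ·)), z.re < 0) :
    ∃ c del : ℝ, 0 < del ∧ ∀ t ≥ 0, ∀ i j, |expE (t • A) i j| ≤ c * Real.exp (-del * t) := by
  set B := A.map (Complex.ofReal ·) with hB
  obtain ⟨c, del, hdel, hb⟩ := exp_decay_linfty B hA
  refine ⟨c, del, hdel, fun t ht i j => ?_⟩
  have hmap : (NormedSpace.exp (t • A)).map (Complex.ofReal ·) = NormedSpace.exp (t • B) := by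
    rw [map_exp_ofReal]
    congr 1
    ext i j
    simp [hB, Matrix.map_apply, Matrix.smul_apply]
  calc |expE (t • A) i j| = ‖(NormedSpace.exp (t • B)) i j‖ := by
        rw [← hmap]
        simp [Matrix.map_apply, exp_eq_expE, Complex.norm_real, Real.norm_eq_abs]
    _ ≤ ‖NormedSpace.exp (t • B)‖ := entry_le_linfty_norm _ i j
    _ ≤ c * Real.exp (-del * t) := hb t ht

/-- Entrywise derivative of `t ↦ expE (t•Aᵀ) * D * expE (t•A)`. -/
theorem expE_prod_entry_hasDerivAt (A D : Matrix n n ℝ) (t : ℝ) (i j : n) :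
    HasDerivAt (fun s : ℝ => (expE (s • Aᵀ) * D * expE (s • A)) i j)
      ((Aᵀ * (expE (t • Aᵀ) * D * expE (t • A))
        + (expE (t • Aᵀ) * D * expE (t • A)) * A) i j) t := by
  have h1 : HasDerivAt (fun s : ℝ => NormedSpace.exp (s • Aᵀ))
      (Aᵀ * NormedSpace.exp (t • Aᵀ)) t := by
    simpa using matDeriv (1 : Matrix n n ℝ) Aᵀ t
  have h2 := hasDerivAt_exp_smul_const (𝕂 := ℝ) A t
  have h3 := (h1.mul_const D).mul h2
  have h4 := (entryCLM (𝔸 := ℝ) i j).hasFDerivAt.comp_hasDerivAt t h3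
  have h5 : HasDerivAt (fun s : ℝ =>
      (NormedSpace.exp (s • Aᵀ) * D * NormedSpace.exp (s • A)) i j)
      ((Aᵀ * (NormedSpace.exp (t • Aᵀ) * D * NormedSpace.exp (t • A))
        + (NormedSpace.exp (t • Aᵀ) * D * NormedSpace.exp (t • A)) * A) i j) t := by
    have hE : ∀ M : Matrix n n ℝ, entryCLM (𝔸 := ℝ) i j M = M i j := fun _ => rfl
    refine h4.congr_deriv ?_
    simp [hE, mul_assoc]
    exact hE _
  simpa only [exp_eq_expE] using h5

end Linfty

attribute [local instance] Matrix.normedAddCommGroup Matrix.normedSpace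

/-- A real square matrix is stable if every eigenvalue (as a complex matrix)
has negative real part. -/
def Matrix.IsStable {n : Type*} [Fintype n] [DecidableEq n] (A : Matrix n n ℝ) : Prop :=
  ∀ z ∈ spectrum ℂ (A.map (Complex.ofReal · )), z.re < 0

section MainAux
/-! ### Auxiliary results in the entrywise sup norm used by the main theorem -/

variable {N : ℕ}

noncomputable def entryCLM' (i j : Fin N) : Matrix (Fin N) (Fin N) ℝ →L[ℝ] ℝ :=
  LinearMap.toContinuousLinearMap
    { toFun := fun M => M i j
      map_add' := fun _ _ => rfl
      map_smul' := fun _ _ => rfl }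

@[simp] lemma entryCLM'_apply (i j : Fin N) (M : Matrix (Fin N) (Fin N) ℝ) :
    entryCLM' i j M = M i j := rfl

noncomputable def lyapCLM (A : Matrix (Fin N) (Fin N) ℝ) :
    Matrix (Fin N) (Fin N) ℝ →L[ℝ] Matrix (Fin N) (Fin N) ℝ :=
  LinearMap.toContinuousLinearMap
    { toFun := fun M => Aᵀ * M + M * A
      map_add' := fun X Y => by noncomm_ring
      map_smul' := fun r X => by
        simp [Matrix.mul_smul, Matrix.smul_mul, smul_add] }

@[simp] lemma lyapCLM_apply (A M : Matrix (Fin N) (Fin N) ℝ) :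
    lyapCLM A M = Aᵀ * M + M * A := rfl

noncomputable def quadCLM (x : Fin N → ℝ) : Matrix (Fin N) (Fin N) ℝ →L[ℝ] ℝ :=
  LinearMap.toContinuousLinearMap
    { toFun := fun M => x ⬝ᵥ (M *ᵥ x)
      map_add' := fun X Y => by simp [Matrix.add_mulVec, dotProduct_add]
      map_smul' := fun r X => by simp [Matrix.smul_mulVec, dotProduct_smul] }

@[simp] lemma quadCLM_apply (x : Fin N → ℝ) (M : Matrix (Fin N) (Fin N) ℝ) :
    quadCLM x M = x ⬝ᵥ (M *ᵥ x) := rfl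

lemma norm_one_le_elem : ‖(1 : Matrix (Fin N) (Fin N) ℝ)‖ ≤ 1 := by
  apply (Matrix.norm_le_iff zero_le_one).2
  intro i j
  rw [Matrix.one_apply]
  split_ifs <;> simp

lemma norm_mul_le_elem (P Q : Matrix (Fin N) (Fin N) ℝ) : ‖P * Q‖ ≤ N * ‖P‖ * ‖Q‖ := by
  apply (Matrix.norm_le_iff (by positivity)).2
  intro i j
  rw [Matrix.mul_apply]
  calc ‖∑ k, P i k * Q k j‖ ≤ ∑ k, ‖P i k * Q k j‖ := norm_sum_le _ _
    _ ≤ ∑ _k : Fin N, ‖P‖ * ‖Q‖ := by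
        refine Finset.sum_le_sum fun k _ => ?_
        rw [norm_mul]
        exact mul_le_mul (Matrix.norm_entry_le_entrywise_sup_norm P)
          (Matrix.norm_entry_le_entrywise_sup_norm Q) (norm_nonneg _) (norm_nonneg _)
    _ = N * ‖P‖ * ‖Q‖ := by simp [mul_assoc]

lemma summable_expSeries_elem (x : Matrix (Fin N) (Fin N) ℝ) :
    Summable fun k : ℕ => (k.factorial : ℝ)⁻¹ • x ^ k := by
  have hpow : ∀ k : ℕ, ‖x ^ k‖ ≤ ((N+1) * ‖x‖ + 1) ^ k := by
    intro k
    induction k with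
    | zero => simpa using norm_one_le_elem
    | succ k ih =>
      rw [pow_succ, pow_succ]
      calc ‖x ^ k * x‖ ≤ N * ‖x ^ k‖ * ‖x‖ := norm_mul_le_elem _ _
        _ ≤ ((N+1) * ‖x‖ + 1) ^ k * (((N+1)) * ‖x‖ + 1) := by
            have h1 : (N : ℝ) * ‖x ^ k‖ * ‖x‖ ≤ ((N+1) * ‖x‖ + 1) ^ k * ((N+1) * ‖x‖) := by
              have hp : (0:ℝ) ≤ ((N+1) * ‖x‖ + 1) ^ k := by positivity
              have := mul_le_mul_of_nonneg_right ih (by positivity : (0:ℝ) ≤ (N+1) * ‖x‖)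
              nlinarith [norm_nonneg (x ^ k), norm_nonneg x]
            nlinarith [pow_nonneg (by positivity : (0:ℝ) ≤ (N+1) * ‖x‖ + 1) k,
              norm_nonneg x]
  apply Summable.of_norm
  have hs := Real.summable_pow_div_factorial ((N+1) * ‖x‖ + 1)
  apply Summable.of_nonneg_of_le (fun k => norm_nonneg _) _ hs
  intro k
  rw [norm_smul, norm_inv, Real.norm_natCast, div_eq_inv_mul]
  gcongr
  exact hpow k

lemma exp_eq_expE_main (x : Matrix (Fin N) (Fin N) ℝ) : NormedSpace.exp x = expE x := by
  ext i j
  rw [NormedSpace.exp_eq_tsum ℝ]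
  simpa [expE] using ((entryCLM' i j).map_tsum (summable_expSeries_elem x))

end MainAux

theorem observability_gramian_integral (N q : ℕ)
    (A : Matrix (Fin N) (Fin N) ℝ) (hA : A.IsStable)
    (C : Matrix (Fin q) (Fin N) ℝ) :
    let f : ℝ → Matrix (Fin N) (Fin N) ℝ := fun t =>
      NormedSpace.exp (t • Aᵀ) * (Cᵀ * C) * NormedSpace.exp (t • A)
    -- the integral converges
    @IntegrableOn _ _ _ _ SeminormedAddGroup.toContinuousENorm f (Set.Ioi (0 : ℝ)) volume ∧
    -- X is symmetric positive semidefinite and solves the Lyapunov equation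
    ∀ X : Matrix (Fin N) (Fin N) ℝ, X = ∫ t in Set.Ioi (0 : ℝ), f t →
      X.PosSemidef ∧ Aᵀ * X + X * A = -(Cᵀ * C) := by
  intro f
  set D : Matrix (Fin N) (Fin N) ℝ := Cᵀ * C with hD
  set F : ℝ → Matrix (Fin N) (Fin N) ℝ := fun t => expE (t • Aᵀ) * D * expE (t • A) with hF
  have hfF : f = F := by
    funext t
    show NormedSpace.exp (t • Aᵀ) * D * NormedSpace.exp (t • A) = F t
    rw [exp_eq_expE_main, exp_eq_expE_main, hF]
  have hDsymm : Dᵀ = D := by rw [hD, Matrix.transpose_mul, Matrix.transpose_transpose]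
  have hderiv : ∀ (t : ℝ) (i j : Fin N), HasDerivAt (fun s => F s i j)
      ((Aᵀ * F t + F t * A) i j) t := fun t i j => by
    simpa using expE_prod_entry_hasDerivAt A D t i j
  have hFcont : Continuous F := by
    apply continuous_matrix
    intro i j
    have hdiff : Differentiable ℝ (fun t => F t i j) := fun t => (hderiv t i j).differentiableAt
    exact hdiff.continuous
  -- exponential decay bound
  obtain ⟨c₁, d₁, hd₁, hb₁⟩ := expE_entry_decay Aᵀ (stable_transpose A hA)
  obtain ⟨c₂, d₂, hd₂, hb₂⟩ := expE_entry_decay A hA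
  set c₁' : ℝ := max c₁ 0 with hc₁'
  set c₂' : ℝ := max c₂ 0 with hc₂'
  have hc₁0 : 0 ≤ c₁' := le_max_right _ _
  have hc₂0 : 0 ≤ c₂' := le_max_right _ _
  set del : ℝ := min d₁ d₂ with hdeldef
  have hdel : 0 < del := lt_min hd₁ hd₂
  have hE1 : ∀ t ≥ (0:ℝ), ‖expE (t • Aᵀ)‖ ≤ c₁' * Real.exp (-d₁ * t) := fun t ht => by
    apply (Matrix.norm_le_iff (by positivity)).2
    intro i j
    exact (hb₁ t ht i j).trans (mul_le_mul_of_nonneg_right (le_max_left _ _) (Real.exp_pos _).le)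
  have hE2 : ∀ t ≥ (0:ℝ), ‖expE (t • A)‖ ≤ c₂' * Real.exp (-d₂ * t) := fun t ht => by
    apply (Matrix.norm_le_iff (by positivity)).2
    intro i j
    exact (hb₂ t ht i j).trans (mul_le_mul_of_nonneg_right (le_max_left _ _) (Real.exp_pos _).le)
  set cF : ℝ := N * N * c₁' * ‖D‖ * c₂' with hcF
  have hcF0 : 0 ≤ cF := by positivity
  have hFnorm : ∀ t ≥ (0:ℝ), ‖F t‖ ≤ cF * Real.exp (-del * t) := by
    intro t ht
    have h1 := hE1 t ht
    have h2 := hE2 t ht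
    have hmul : ‖F t‖ ≤ N * (N * ‖expE (t • Aᵀ)‖ * ‖D‖) * ‖expE (t • A)‖ := by
      calc ‖F t‖ ≤ N * ‖expE (t • Aᵀ) * D‖ * ‖expE (t • A)‖ := norm_mul_le_elem _ _
        _ ≤ _ := by
            apply mul_le_mul_of_nonneg_right _ (norm_nonneg _)
            exact mul_le_mul_of_nonneg_left (norm_mul_le_elem _ _) (Nat.cast_nonneg N)
    have hexp : Real.exp (-d₁ * t) * Real.exp (-d₂ * t) ≤ Real.exp (-del * t) := by
      rw [← Real.exp_add]
      apply Real.exp_le_exp.2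
      have h₁ : del ≤ d₁ := min_le_left _ _
      have h₂ : del ≤ d₂ := min_le_right _ _
      nlinarith [hd₂.le]
    calc ‖F t‖ ≤ N * (N * ‖expE (t • Aᵀ)‖ * ‖D‖) * ‖expE (t • A)‖ := hmul
      _ ≤ N * (N * (c₁' * Real.exp (-d₁ * t)) * ‖D‖) * (c₂' * Real.exp (-d₂ * t)) := by
          gcongr
      _ = cF * (Real.exp (-d₁ * t) * Real.exp (-d₂ * t)) := by rw [hcF]; ring
      _ ≤ cF * Real.exp (-del * t) := mul_le_mul_of_nonneg_left hexp hcF0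
  have hInt : @IntegrableOn _ _ _ _ SeminormedAddGroup.toContinuousENorm f (Set.Ioi (0:ℝ)) volume := by
    rw [hfF]
    haveI : TopologicalSpace.PseudoMetrizableSpace (Matrix (Fin N) (Fin N) ℝ) :=
      inferInstanceAs (TopologicalSpace.PseudoMetrizableSpace (Fin N → Fin N → ℝ))
    refine Integrable.mono' ((exp_neg_integrableOn_Ioi 0 hdel).const_mul cF)
      (hFcont.aestronglyMeasurable) ?_
    filter_upwards [ae_restrict_mem measurableSet_Ioi] with t ht
    exact hFnorm t (le_of_lt ht)
  refine ⟨hInt, ?_⟩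
  intro X hX
  have hIntF : @Integrable _ _ SeminormedAddGroup.toContinuousENorm _ _ F (volume.restrict (Set.Ioi (0:ℝ))) := by
    have h := hInt
    rw [hfF] at h
    exact h
  have hXij : ∀ i j, X i j = ∫ t in Set.Ioi (0:ℝ), F t i j := by
    intro i j
    rw [hX, hfF]
    exact ((entryCLM' i j).integral_comp_comm hIntF).symm
  have hF0 : F 0 = D := by
    rw [hF]
    simp [expE_zero]
  -- entries of F tend to 0
  have hgt0 : Filter.Tendsto (fun t : ℝ => cF * Real.exp (-del * t)) Filter.atTop (nhds 0) := by
    have h1 : Filter.Tendsto (fun t : ℝ => del * t) Filter.atTop Filter.atTop :=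
      Filter.Tendsto.const_mul_atTop hdel Filter.tendsto_id
    have h2 : Filter.Tendsto (fun t : ℝ => Real.exp (-(del * t))) Filter.atTop (nhds 0) :=
      Real.tendsto_exp_neg_atTop_nhds_zero.comp h1
    have h3 := h2.const_mul cF
    simpa [neg_mul] using h3
  have hFt0 : ∀ i j, Filter.Tendsto (fun t => F t i j) Filter.atTop (nhds 0) := by
    intro i j
    apply squeeze_zero_norm' _ hgt0
    filter_upwards [Filter.eventually_ge_atTop (0:ℝ)] with t ht
    exact (Matrix.norm_entry_le_entrywise_sup_norm (F t)).trans (hFnorm t ht)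
  -- integrability of the derivative and of entries
  have hGint : @Integrable _ _ SeminormedAddGroup.toContinuousENorm _ _ (fun t => Aᵀ * F t + F t * A) (volume.restrict (Set.Ioi (0:ℝ))) := by
    exact (lyapCLM A).integrable_comp hIntF
  have hGijint : ∀ i j, Integrable (fun t => (Aᵀ * F t + F t * A) i j)
      (volume.restrict (Set.Ioi (0:ℝ))) := fun i j => by
    exact (entryCLM' i j).integrable_comp hGint
  have hFijint : ∀ i j, Integrable (fun t => F t i j) (volume.restrict (Set.Ioi (0:ℝ))) :=
    fun i j => by exact (entryCLM' i j).integrable_comp hIntF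
  -- fundamental theorem of calculus on (0, ∞), entrywise
  have hFTC : ∀ i j, (∫ t in Set.Ioi (0:ℝ), (Aᵀ * F t + F t * A) i j) = -(D i j) := by
    intro i j
    have h0 : ContinuousWithinAt (fun t => F t i j) (Set.Ici (0:ℝ)) 0 :=
      (hderiv 0 i j).continuousAt.continuousWithinAt
    have hfd : ∀ x ∈ Set.Ioi (0:ℝ), HasDerivAt (fun t => F t i j)
        ((Aᵀ * F x + F x * A) i j) x := fun x _ => hderiv x i j
    have hkey := MeasureTheory.integral_Ioi_of_hasDerivAt_of_tendsto h0 hfd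
      (hGijint i j) (hFt0 i j)
    rw [hkey, hF0]
    ring
  -- the Lyapunov equation
  have hlyap : Aᵀ * X + X * A = -D := by
    ext i j
    have hint1 : ∀ k, Integrable (fun t => Aᵀ i k * F t k j)
        (volume.restrict (Set.Ioi (0:ℝ))) := fun k => (hFijint k j).const_mul _
    have hint2 : ∀ k, Integrable (fun t => F t i k * A k j)
        (volume.restrict (Set.Ioi (0:ℝ))) := fun k => (hFijint i k).mul_const _
    have h1 : (Aᵀ * X) i j = ∫ t in Set.Ioi (0:ℝ), ∑ k, Aᵀ i k * F t k j := by
      calc (Aᵀ * X) i j = ∑ k, Aᵀ i k * ∫ t in Set.Ioi (0:ℝ), F t k j := by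
            rw [Matrix.mul_apply]; exact Finset.sum_congr rfl fun k _ => by rw [hXij]
        _ = ∑ k, ∫ t in Set.Ioi (0:ℝ), Aᵀ i k * F t k j :=
            Finset.sum_congr rfl fun k _ => (integral_const_mul _ _).symm
        _ = ∫ t in Set.Ioi (0:ℝ), ∑ k, Aᵀ i k * F t k j :=
            (integral_finset_sum _ fun k _ => hint1 k).symm
    have h2 : (X * A) i j = ∫ t in Set.Ioi (0:ℝ), ∑ k, F t i k * A k j := by
      calc (X * A) i j = ∑ k, (∫ t in Set.Ioi (0:ℝ), F t i k) * A k j := by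
            rw [Matrix.mul_apply]; exact Finset.sum_congr rfl fun k _ => by rw [hXij]
        _ = ∑ k, ∫ t in Set.Ioi (0:ℝ), F t i k * A k j :=
            Finset.sum_congr rfl fun k _ => (integral_mul_const _ _).symm
        _ = ∫ t in Set.Ioi (0:ℝ), ∑ k, F t i k * A k j :=
            (integral_finset_sum _ fun k _ => hint2 k).symm
    have hsum : (Aᵀ * X + X * A) i j
        = ∫ t in Set.Ioi (0:ℝ), ((∑ k, Aᵀ i k * F t k j) + ∑ k, F t i k * A k j) := by
      rw [Matrix.add_apply, h1, h2,
        ← integral_add (integrable_finset_sum _ fun k _ => hint1 k)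
          (integrable_finset_sum _ fun k _ => hint2 k)]
    calc (Aᵀ * X + X * A) i j
        = ∫ t in Set.Ioi (0:ℝ), ((∑ k, Aᵀ i k * F t k j) + ∑ k, F t i k * A k j) := hsum
      _ = ∫ t in Set.Ioi (0:ℝ), (Aᵀ * F t + F t * A) i j := by
          have hfe : ∀ t : ℝ, (∑ k, Aᵀ i k * F t k j) + (∑ k, F t i k * A k j)
              = (Aᵀ * F t + F t * A) i j := by
            intro t
            simp [Matrix.add_apply, Matrix.mul_apply]
          simp only [hfe]
      _ = -(D i j) := hFTC i j
      _ = (-D) i j := by rw [Matrix.neg_apply]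
  -- symmetry of F t
  have hsymm : ∀ t : ℝ, (F t)ᵀ = F t := by
    intro t
    have h1 : expE (t • Aᵀ) = (expE (t • A))ᵀ := by
      rw [← Matrix.transpose_smul, expE_transpose]
    rw [hF]
    simp only [Matrix.transpose_mul, Matrix.transpose_transpose, h1, hDsymm,
      Matrix.transpose_transpose, Matrix.mul_assoc]
  have hherm : X.IsHermitian := by
    show Xᴴ = X
    ext i j
    rw [Matrix.conjTranspose_apply, star_trivial, hXij j i, hXij i j]
    congr 1
    funext t
    rw [show F t j i = (F t)ᵀ i j from rfl, hsymm t]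
  have hpos : ∀ x : Fin N → ℝ, 0 ≤ star x ⬝ᵥ (X *ᵥ x) := by
    intro x
    have hstar : star x = x := by funext k; simp
    rw [hstar]
    have hq : x ⬝ᵥ (X *ᵥ x) = ∫ t in Set.Ioi (0:ℝ), x ⬝ᵥ (F t *ᵥ x) := by
      rw [hX, hfF]
      exact ((quadCLM x).integral_comp_comm hIntF).symm
    rw [hq]
    refine integral_nonneg fun t => ?_
    have hfac : F t = (C * expE (t • A))ᴴ * (C * expE (t • A)) := by
      have hconj : (C * expE (t • A))ᴴ = (C * expE (t • A))ᵀ := by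
        ext i j; simp [Matrix.conjTranspose_apply]
      rw [hconj, Matrix.transpose_mul,
        show (expE (t • A))ᵀ = expE (t • Aᵀ) by rw [← Matrix.transpose_smul, expE_transpose],
        hF, hD]
      simp [Matrix.mul_assoc]
    have hps := (Matrix.posSemidef_conjTranspose_mul_self (C * expE (t • A))).dotProduct_mulVec_nonneg x
    rw [hfac]
    simpa [hstar, Pi.zero_apply] using hps
  exact ⟨Matrix.PosSemidef.of_dotProduct_mulVec_nonneg hherm hpos, hlyap⟩
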